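/- Let A be a symmetric adversary over a finite set Π and Q ⊆ Π. For all L, L' ⊆ Π with |L'| = |L| and L ∩ Q ⊆ L' ∩ Q, one has setcon(A|_{L',Q}) ≥ setcon(A|_{L,Q}). -/

import Mathlib

variable {α : Type*} [DecidableEq α]

/-- The restriction `A|_P` of an adversary `A` to a set of processes `P`:
the live sets of `A` that are contained in `P`. -/
def restrict (A : Finset (Finset α)) (P : Finset α) : Finset (Finset α) :=
  A.filter fun S => S ⊆ P

/-- The set consensus power `setcon A` of an adversary `A`:
`setcon ∅ = 0` and, for `A ≠ ∅`,
`setcon A = 1 + max_{S ∈ A} min_{a ∈ S} setcon (A|_{S \ {a}})`. -/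
def setcon (A : Finset (Finset α)) : ℕ :=
  if A = ∅ then 0
  else 1 + A.attach.sup fun S =>
    WithTop.untopD 0 (S.1.attach.image fun a => setcon (restrict A (S.1.erase a.1))).min
termination_by A.card
decreasing_by
  apply Finset.card_lt_card
  rw [Finset.ssubset_def]
  refine ⟨Finset.filter_subset _ _, fun hsub => ?_⟩
  have hmem := hsub S.2
  rw [restrict, Finset.mem_filter] at hmem
  exact Finset.notMem_erase a.1 S.1 (hmem.2 a.2)

/-- The restriction `A|_{P,Q}`: live sets of `A` contained in `P` that intersect `Q`. -/
def restrictTo (A : Finset (Finset α)) (P Q : Finset α) : Finset (Finset α) :=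
  (restrict A P).filter fun S => (S ∩ Q).Nonempty

/-- An adversary is fair if for all `P` and all `Q ⊆ P`,
`setcon (A|_{P,Q}) = min |Q| (setcon (A|_P))`. -/
def Fair (A : Finset (Finset α)) : Prop :=
  ∀ P Q : Finset α, Q ⊆ P →
    setcon (restrictTo A P Q) = min Q.card (setcon (restrict A P))

/-- `csize A`: the minimal cardinality of a hitting set of `A`, i.e. of a set
intersecting every live set of `A`. -/
noncomputable def csize (A : Finset (Finset α)) : ℕ :=
  sInf {k | ∃ H : Finset α, H.card = k ∧ ∀ S ∈ A, (H ∩ S).Nonempty}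

lemma mins_le_mins {s t : Finset α} {f g : α → ℕ} (hs : s.Nonempty) (ht : t.Nonempty)
    (h : ∀ b ∈ t, ∃ a ∈ s, f a ≤ g b) :
    WithTop.untopD 0 ((s.image f).min) ≤ WithTop.untopD 0 ((t.image g).min) := by
  have hsi : (s.image f).Nonempty := hs.image f
  have hti : (t.image g).Nonempty := ht.image g
  rw [← Finset.coe_min' hsi, ← Finset.coe_min' hti]
  simp only [WithTop.untopD_coe]
  obtain ⟨y, hy, hymin⟩ : ∃ y ∈ t, g y = (t.image g).min' hti := by
    obtain ⟨y, hy, hyeq⟩ := Finset.mem_image.1 (Finset.min'_mem _ hti)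
    exact ⟨y, hy, hyeq⟩
  obtain ⟨a, ha, hfa⟩ := h y hy
  calc (s.image f).min' hsi ≤ f a := Finset.min'_le _ _ (Finset.mem_image_of_mem f ha)
    _ ≤ g y := hfa
    _ = _ := hymin

lemma setcon_eq (A : Finset (Finset α)) :
    setcon A = if A = ∅ then 0
      else 1 + A.sup fun S => WithTop.untopD 0 ((S.image fun a => setcon (restrict A (S.erase a))).min) := by
  rw [setcon]
  have h1 := Finset.sup_attach A (fun S => WithTop.untopD 0 ((S.attach.image fun a =>
    setcon (restrict A (S.erase a.1))).min))
  congr 1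
  rw [h1]
  congr 1
  apply Finset.sup_congr rfl
  intro S _
  congr 1
  have : (S.attach.image fun a => setcon (restrict A (S.erase a.1)))
      = (S.attach.image Subtype.val).image fun a => setcon (restrict A (S.erase a)) := by
    rw [Finset.image_image]; rfl
  rw [this, Finset.attach_image_val]

lemma restrict_restrictTo (A : Finset (Finset α)) {L P : Finset α} (Q : Finset α) (h : P ⊆ L) :
    restrict (restrictTo A L Q) P = restrictTo A P Q := by
  ext S
  simp only [restrict, restrictTo, Finset.mem_filter]
  constructor
  · rintro ⟨⟨⟨hA, _⟩, hQ⟩, hP⟩; exact ⟨⟨hA, hP⟩, hQ⟩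
  · rintro ⟨⟨hA, hP⟩, hQ⟩; exact ⟨⟨⟨hA, hP.trans h⟩, hQ⟩, hP⟩

lemma key_mono (A : Finset (Finset α))
    (hsym : ∀ S ∈ A, ∀ S' : Finset α, S'.card = S.card → S' ∈ A)
    (Q : Finset α) :
    ∀ n (L L' : Finset α), (restrictTo A L Q).card ≤ n → L'.card = L.card →
      L ∩ Q ⊆ L' ∩ Q → setcon (restrictTo A L Q) ≤ setcon (restrictTo A L' Q) := by
  intro n
  induction n with
  | zero =>
    intro L L' hn _ _
    have hE : restrictTo A L Q = ∅ := Finset.card_eq_zero.1 (Nat.le_zero.1 hn)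
    rw [setcon_eq, if_pos hE]
    exact Nat.zero_le _
  | succ n ih =>
    intro L L' hn hcard hLQ
    by_cases hE : restrictTo A L Q = ∅
    · rw [setcon_eq, if_pos hE]; exact Nat.zero_le _
    -- construction of S' from S
    have hconstruct : ∀ S ∈ restrictTo A L Q,
        ∃ S', S' ∈ restrictTo A L' Q ∧ S'.card = S.card ∧ S ∩ Q ⊆ S' := by
      intro S hS
      rw [restrictTo, restrict, Finset.mem_filter, Finset.mem_filter] at hS
      obtain ⟨⟨hSA, hSL⟩, hSQ⟩ := hS
      have hSQL' : S ∩ Q ⊆ L' := by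
        intro x hx
        have : x ∈ L ∩ Q := Finset.mem_inter.2
          ⟨hSL (Finset.mem_inter.1 hx).1, (Finset.mem_inter.1 hx).2⟩
        exact (Finset.mem_inter.1 (hLQ this)).1
      have hSc : S.card ≤ L'.card := hcard ▸ Finset.card_le_card hSL
      have hSQc : (S ∩ Q).card ≤ S.card := Finset.card_le_card Finset.inter_subset_left
      have hspace : S.card - (S ∩ Q).card ≤ (L' \ (S ∩ Q)).card := by
        rw [Finset.card_sdiff_of_subset hSQL']
        omega
      obtain ⟨T, hTsub, hTcard⟩ := Finset.exists_subset_card_eq hspace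
      have hdisj : Disjoint (S ∩ Q) T := by
        refine Finset.disjoint_left.2 fun x hx hxT => ?_
        exact (Finset.mem_sdiff.1 (hTsub hxT)).2 hx
      refine ⟨(S ∩ Q) ∪ T, ?_, ?_, Finset.subset_union_left⟩
      · have hcardS' : ((S ∩ Q) ∪ T).card = S.card := by
          rw [Finset.card_union_of_disjoint hdisj, hTcard]
          omega
        rw [restrictTo, restrict, Finset.mem_filter, Finset.mem_filter]
        refine ⟨⟨hsym S hSA _ hcardS', ?_⟩, ?_⟩
        · exact Finset.union_subset hSQL' (hTsub.trans Finset.sdiff_subset)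
        · obtain ⟨x, hx⟩ := hSQ
          exact ⟨x, Finset.mem_inter.2 ⟨Finset.mem_union_left _ hx,
            (Finset.mem_inter.1 hx).2⟩⟩
      · rw [Finset.card_union_of_disjoint hdisj, hTcard]
        omega
    obtain ⟨S₀, hS₀⟩ := Finset.nonempty_iff_ne_empty.2 hE
    obtain ⟨S₀', hS₀', -, -⟩ := hconstruct S₀ hS₀
    have hE' : restrictTo A L' Q ≠ ∅ := Finset.nonempty_iff_ne_empty.1 ⟨S₀', hS₀'⟩
    rw [setcon_eq (restrictTo A L Q), setcon_eq (restrictTo A L' Q), if_neg hE, if_neg hE']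
    apply add_le_add_right
    apply Finset.sup_le
    intro S hS
    obtain ⟨S', hS', hcS, hsub⟩ := hconstruct S hS
    refine le_trans ?_ (Finset.le_sup hS')
    -- basic facts about S
    have hSfacts := hS
    rw [restrictTo, restrict, Finset.mem_filter, Finset.mem_filter] at hSfacts
    obtain ⟨⟨hSA, hSL⟩, hSQ⟩ := hSfacts
    have hS'facts := hS'
    rw [restrictTo, restrict, Finset.mem_filter, Finset.mem_filter] at hS'facts
    obtain ⟨⟨hS'A, hS'L⟩, hS'Q⟩ := hS'facts
    have hSne : S.Nonempty := ⟨hSQ.choose, (Finset.mem_inter.1 hSQ.choose_spec).1⟩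
    have hS'ne : S'.Nonempty := Finset.card_pos.1 (hcS ▸ Finset.card_pos.2 hSne)
    -- rewrite the restricts
    have hrw1 : (S.image fun a => setcon (restrict (restrictTo A L Q) (S.erase a)))
        = S.image fun a => setcon (restrictTo A (S.erase a) Q) := by
      apply Finset.image_congr
      intro a _
      show setcon (restrict (restrictTo A L Q) (S.erase a)) = setcon (restrictTo A (S.erase a) Q)
      rw [restrict_restrictTo A Q ((Finset.erase_subset a S).trans hSL)]
    have hrw2 : (S'.image fun a => setcon (restrict (restrictTo A L' Q) (S'.erase a)))
        = S'.image fun a => setcon (restrictTo A (S'.erase a) Q) := by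
      apply Finset.image_congr
      intro a _
      show setcon (restrict (restrictTo A L' Q) (S'.erase a)) = setcon (restrictTo A (S'.erase a) Q)
      rw [restrict_restrictTo A Q ((Finset.erase_subset a S').trans hS'L)]
    rw [hrw1, hrw2]
    apply mins_le_mins hSne hS'ne
    intro b hb
    -- card bound for the recursive call
    have hcardrec : ∀ a ∈ S, (restrictTo A (S.erase a) Q).card ≤ n := by
      intro a ha
      have hssub : restrictTo A (S.erase a) Q ⊂ restrictTo A L Q := by
        constructor
        · intro T hT
          rw [restrictTo, restrict, Finset.mem_filter, Finset.mem_filter] at hT ⊢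
          exact ⟨⟨hT.1.1, (hT.1.2.trans (Finset.erase_subset a S)).trans hSL⟩, hT.2⟩
        · intro hcontra
          have := hcontra hS
          rw [restrictTo, restrict, Finset.mem_filter, Finset.mem_filter] at this
          exact Finset.notMem_erase a S (this.1.2 ha)
      have := Finset.card_lt_card hssub
      omega
    by_cases hbQ : b ∈ S ∩ Q
    · -- b itself is in S; erase b on both sides
      have hbS : b ∈ S := (Finset.mem_inter.1 hbQ).1
      refine ⟨b, hbS, ih (S.erase b) (S'.erase b) (hcardrec b hbS) ?_ ?_⟩
      · rw [Finset.card_erase_of_mem hb, Finset.card_erase_of_mem hbS, hcS]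
      · intro x hx
        rw [Finset.mem_inter, Finset.mem_erase] at hx ⊢
        obtain ⟨⟨hxb, hxS⟩, hxQ⟩ := hx
        exact ⟨⟨hxb, hsub (Finset.mem_inter.2 ⟨hxS, hxQ⟩)⟩, hxQ⟩
    · -- b ∉ S ∩ Q : pick a ∈ S, a ∉ Q
      have hSQsub : S ∩ Q ⊆ S'.erase b := by
        intro x hx
        rw [Finset.mem_erase]
        exact ⟨fun h => hbQ (h ▸ hx), hsub hx⟩
      have hScard : (S ∩ Q).card < S.card := by
        have h1 : (S ∩ Q).card ≤ (S'.erase b).card := Finset.card_le_card hSQsub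
        rw [Finset.card_erase_of_mem hb, hcS] at h1
        have h2 : 1 ≤ S.card := Finset.card_pos.2 hSne
        omega
      have hnot : ¬ S ⊆ Q := by
        intro h
        rw [Finset.inter_eq_left.2 h] at hScard
        omega
      obtain ⟨a, haS, haQ⟩ := Finset.not_subset.1 hnot
      refine ⟨a, haS, ih (S.erase a) (S'.erase b) (hcardrec a haS) ?_ ?_⟩
      · rw [Finset.card_erase_of_mem hb, Finset.card_erase_of_mem haS, hcS]
      · intro x hx
        rw [Finset.mem_inter, Finset.mem_erase] at hx
        rw [Finset.mem_inter]
        obtain ⟨⟨hxa, hxS⟩, hxQ⟩ := hx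
        exact ⟨hSQsub (Finset.mem_inter.2 ⟨hxS, hxQ⟩), hxQ⟩


/-- for a symmetric adversary, if `|L'| = |L|` and `L ∩ Q ⊆ L' ∩ Q`,
then `setcon (A|_{L',Q}) ≥ setcon (A|_{L,Q})`. -/
theorem setcon_restrictTo_mono_of_symmetric [Fintype α] (A : Finset (Finset α))
    (hne : ∀ S ∈ A, S.Nonempty)
    (hsym : ∀ S ∈ A, ∀ S' : Finset α, S'.card = S.card → S' ∈ A)
    (Q L L' : Finset α) (hcard : L'.card = L.card) (hLQ : L ∩ Q ⊆ L' ∩ Q) :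
    setcon (restrictTo A L Q) ≤ setcon (restrictTo A L' Q) := by
  exact key_mono A hsym Q (restrictTo A L Q).card L L' le_rfl hcard hLQ
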